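/- Let t ∈ (0,1/2) and t' = arcsin(√t). Let p be a random variable with density f^T on [t,1−t], and conditionally on p let X ∈ {0,1} be Bernoulli with P[X = 1] = p; set U = g1^T(p) if X = 1 and U = g0^T(p) if X = 0. Then U has probability density φ(u) = 2/((π − 4t')·(1 + u²)²) on the set T = [√(t/(1−t)), √((1−t)/t)] ∪ [−√((1−t)/t), −√(t/(1−t))] (and density 0 outside T); that is, for every bounded measurable h: ℝ → ℝ, E[h(U)] = ∫_T h(u)·2/((π − 4t')·(1 + u²)²) du. -/

import Mathlib

open MeasureTheory Real

noncomputable section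

/-- Bernoulli measure on `Bool` with parameter `p`. -/
def bern (p : ℝ) : Measure Bool :=
  ENNReal.ofReal p • Measure.dirac true + ENNReal.ofReal (1 - p) • Measure.dirac false

/-- The measure on `ℝ` with density `f` (w.r.t. Lebesgue measure). -/
def biasMeasure (f : ℝ → ℝ) : Measure ℝ :=
  MeasureTheory.volume.withDensity fun p => ENNReal.ofReal (f p)

def tprime (t : ℝ) : ℝ := Real.arcsin (Real.sqrt t)

/-- Tardos' bias density (extended by `0` outside `[t, 1-t]`). -/
def fT (t : ℝ) (p : ℝ) : ℝ :=
  if p ∈ Set.Icc t (1 - t) then 1 / ((π - 4 * tprime t) * Real.sqrt (p * (1 - p))) else 0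

/-- Tardos' accusation function `g1`. -/
def g1T (p : ℝ) : ℝ := Real.sqrt ((1 - p) / p)

/-- Tardos' accusation function `g0`. -/
def g0T (p : ℝ) : ℝ := - Real.sqrt (p / (1 - p))

/-- The joint law of a single bias `p` (with density `f^T`) and the corresponding
Bernoulli(`p`) code symbol `X`. -/
def columnMeasure (t : ℝ) : Measure (ℝ × Bool) :=
  (biasMeasure (fT t)).bind fun p => (Measure.dirac p).prod (bern p)

/-! ### Auxiliary lemmas -/

lemma fT_nonneg (t p : ℝ) (hC : 0 < π - 4 * tprime t) : 0 ≤ fT t p := by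
  unfold fT
  split
  · exact div_nonneg one_pos.le (mul_nonneg hC.le (Real.sqrt_nonneg _))
  · exact le_refl 0

lemma measurable_fT (t : ℝ) : Measurable (fT t) := by
  unfold fT
  apply Measurable.ite measurableSet_Icc ?_ measurable_const
  exact measurable_const.div
    (measurable_const.mul ((measurable_id.mul (measurable_const.sub measurable_id)).sqrt))

instance bern_isFiniteMeasure (p : ℝ) : IsFiniteMeasure (bern p) := by
  constructor
  rw [bern]
  simp only [Measure.coe_add, Pi.add_apply, Measure.smul_apply, smul_eq_mul,
    Measure.dirac_apply' _ MeasurableSet.univ, Set.indicator_univ, Pi.one_apply, mul_one]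
  exact ENNReal.add_lt_top.mpr ⟨ENNReal.ofReal_lt_top, ENNReal.ofReal_lt_top⟩

lemma kernel_apply (p : ℝ) {s : Set (ℝ × Bool)} (hs : MeasurableSet s) :
    ((Measure.dirac p).prod (bern p)) s
      = ENNReal.ofReal p * Set.indicator s 1 (p, true)
        + ENNReal.ofReal (1 - p) * Set.indicator s 1 (p, false) := by
  have hind : ∀ b : Bool,
      (Prod.mk p ⁻¹' s).indicator (1 : Bool → ENNReal) b = s.indicator 1 (p, b) := by
    intro b
    by_cases hb : (p, b) ∈ s
    · rw [Set.indicator_of_mem (Set.mem_preimage.mpr hb), Set.indicator_of_mem hb]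
      rfl
    · rw [Set.indicator_of_notMem (fun hc => hb (Set.mem_preimage.mp hc)),
        Set.indicator_of_notMem hb]
  rw [Measure.dirac_prod, Measure.map_apply measurable_prodMk_left hs]
  simp only [bern, Measure.coe_add, Pi.add_apply, Measure.smul_apply, smul_eq_mul,
    Measure.dirac_apply' _ (measurable_prodMk_left hs)]
  rw [hind true, hind false]

lemma meas_ind (b : Bool) {s : Set (ℝ × Bool)} (hs : MeasurableSet s) :
    Measurable fun p : ℝ => Set.indicator s (1 : ℝ × Bool → ENNReal) (p, b) := by
  have he : (fun p : ℝ => Set.indicator s (1 : ℝ × Bool → ENNReal) (p, b))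
      = Set.indicator ((fun p : ℝ => (p, b)) ⁻¹' s) 1 := by
    funext p
    by_cases hp : (p, b) ∈ s
    · rw [Set.indicator_of_mem hp,
        Set.indicator_of_mem (show p ∈ (fun p : ℝ => (p, b)) ⁻¹' s from hp)]
      rfl
    · rw [Set.indicator_of_notMem hp,
        Set.indicator_of_notMem (show p ∉ (fun p : ℝ => (p, b)) ⁻¹' s from hp)]
  rw [he]
  exact measurable_const.indicator (measurable_prodMk_right hs)

lemma kernel_measurable : Measurable fun p : ℝ => (Measure.dirac p).prod (bern p) := by
  apply Measure.measurable_of_measurable_coe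
  intro s hs
  simp_rw [kernel_apply _ hs]
  exact (measurable_id.ennreal_ofReal.mul (meas_ind true hs)).add
    ((measurable_const.sub measurable_id).ennreal_ofReal.mul (meas_ind false hs))

lemma columnMeasure_eq (t : ℝ) (hC : 0 < π - 4 * tprime t) :
    columnMeasure t
      = Measure.map (fun p => (p, true))
          (volume.withDensity fun p => ENNReal.ofReal (fT t p * p))
        + Measure.map (fun p => (p, false))
          (volume.withDensity fun p => ENNReal.ofReal (fT t p * (1 - p))) := by
  ext s hs
  have hterm : ∀ (b : Bool) (f : ℝ → ENNReal), Measurable f →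
      ∫⁻ p, f p * Set.indicator s 1 (p, b)
        = (Measure.map (fun p => (p, b)) (volume.withDensity f)) s := by
    intro b f hf
    have hpre : MeasurableSet ((fun p : ℝ => (p, b)) ⁻¹' s) :=
      measurable_prodMk_right hs
    rw [Measure.map_apply measurable_prodMk_right hs,
      withDensity_apply _ hpre, ← lintegral_indicator hpre]
    congr 1
    funext p
    by_cases hp : (p, b) ∈ s
    · rw [Set.indicator_of_mem hp, Pi.one_apply, mul_one,
        Set.indicator_of_mem (show p ∈ (fun p : ℝ => (p, b)) ⁻¹' s from hp)]
    · rw [Set.indicator_of_notMem hp, mul_zero,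
        Set.indicator_of_notMem (show p ∉ (fun p : ℝ => (p, b)) ⁻¹' s from hp)]
  have hmG : Measurable fun p : ℝ => ENNReal.ofReal p * Set.indicator s 1 (p, true)
      + ENNReal.ofReal (1 - p) * Set.indicator s 1 (p, false) :=
    ((measurable_id.ennreal_ofReal).mul (meas_ind true hs)).add
      (((measurable_const.sub measurable_id).ennreal_ofReal).mul (meas_ind false hs))
  rw [columnMeasure, Measure.bind_apply hs kernel_measurable.aemeasurable]
  simp_rw [kernel_apply _ hs]
  rw [biasMeasure, lintegral_withDensity_eq_lintegral_mul _ (measurable_fT t).ennreal_ofReal hmG]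
  have hpw : ∀ p : ℝ,
      ENNReal.ofReal (fT t p) * (ENNReal.ofReal p * Set.indicator s 1 (p, true)
        + ENNReal.ofReal (1 - p) * Set.indicator s 1 (p, false))
      = ENNReal.ofReal (fT t p * p) * Set.indicator s 1 (p, true)
        + ENNReal.ofReal (fT t p * (1 - p)) * Set.indicator s 1 (p, false) := by
    intro p
    rw [ENNReal.ofReal_mul (fT_nonneg t p hC), ENNReal.ofReal_mul (fT_nonneg t p hC)]
    ring
  simp only [Pi.mul_apply]
  calc ∫⁻ p, ENNReal.ofReal (fT t p) * (ENNReal.ofReal p * Set.indicator s 1 (p, true)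
        + ENNReal.ofReal (1 - p) * Set.indicator s 1 (p, false))
      = ∫⁻ p, (ENNReal.ofReal (fT t p * p) * Set.indicator s 1 (p, true)
        + ENNReal.ofReal (fT t p * (1 - p)) * Set.indicator s 1 (p, false)) := by
        exact lintegral_congr hpw
    _ = (∫⁻ p, ENNReal.ofReal (fT t p * p) * Set.indicator s 1 (p, true))
        + ∫⁻ p, ENNReal.ofReal (fT t p * (1 - p)) * Set.indicator s 1 (p, false) := by
        exact lintegral_add_left
          (((measurable_fT t).mul measurable_id).ennreal_ofReal.mul (meas_ind true hs)) _
    _ = _ := by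
        have hm1 : Measurable fun p : ℝ => ENNReal.ofReal (fT t p * p) :=
          ((measurable_fT t).mul measurable_id).ennreal_ofReal
        have hm0 : Measurable fun p : ℝ => ENNReal.ofReal (fT t p * (1 - p)) :=
          ((measurable_fT t).mul (measurable_const.sub measurable_id)).ennreal_ofReal
        rw [hterm true _ hm1, hterm false _ hm0, Measure.add_apply]

lemma hC_pos {t : ℝ} (ht : t ∈ Set.Ioo (0:ℝ) (1/2)) : 0 < π - 4 * tprime t := by
  obtain ⟨ht0, ht2⟩ := ht
  have h2 : Real.sqrt t < Real.sqrt 2 / 2 := by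
    rw [Real.sqrt_lt' (by positivity)]
    have : Real.sqrt 2 ^ 2 = 2 := Real.sq_sqrt (by norm_num)
    nlinarith
  have hlt : tprime t < π / 4 := by
    rw [tprime, Real.arcsin_lt_iff_lt_sin'
      ⟨by linarith [Real.pi_pos], by linarith [Real.pi_pos]⟩, Real.sin_pi_div_four]
    exact h2
  linarith

lemma fT_mem (t p : ℝ) (hp : p ∈ Set.Icc t (1 - t)) :
    fT t p = 1 / ((π - 4 * tprime t) * Real.sqrt (p * (1 - p))) := if_pos hp

lemma fT_not_mem (t p : ℝ) (hp : p ∉ Set.Icc t (1 - t)) : fT t p = 0 := if_neg hp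

lemma g1_hasDeriv {p : ℝ} (hp0 : 0 < p) (hp1 : p < 1) :
    HasDerivAt g1T (1 / (2 * Real.sqrt ((1 - p) / p)) * (-1 / p ^ 2)) p := by
  have hin : HasDerivAt (fun x : ℝ => (1 - x) / x) (-1 / p ^ 2) p := by
    have h1 : HasDerivAt (fun x : ℝ => 1 - x) (0 - 1) p :=
      (hasDerivAt_const p 1).sub (hasDerivAt_id p)
    have h2 : HasDerivAt (fun x : ℝ => x) 1 p := hasDerivAt_id p
    have h3 : HasDerivAt (fun x : ℝ => (1 - x) / x) _ p := h1.div h2 hp0.ne'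
    convert h3 using 1
    ring
  have hs : (1 - p) / p ≠ 0 := ne_of_gt (div_pos (by linarith) hp0)
  have h4 := hin.sqrt hs
  rw [show 1 / (2 * Real.sqrt ((1 - p) / p)) * (-1 / p ^ 2)
      = (-1 / p ^ 2) / (2 * Real.sqrt ((1 - p) / p)) from by ring]
  exact h4

lemma g0_hasDeriv {p : ℝ} (hp0 : 0 < p) (hp1 : p < 1) :
    HasDerivAt g0T (-(1 / (2 * Real.sqrt (p / (1 - p))) * (1 / (1 - p) ^ 2))) p := by
  have hin : HasDerivAt (fun x : ℝ => x / (1 - x)) (1 / (1 - p) ^ 2) p := by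
    have h1 : HasDerivAt (fun x : ℝ => 1 - x) (0 - 1) p :=
      (hasDerivAt_const p 1).sub (hasDerivAt_id p)
    have h2 : HasDerivAt (fun x : ℝ => x) 1 p := hasDerivAt_id p
    have h3 : HasDerivAt (fun x : ℝ => x / (1 - x)) _ p := h2.div h1 (by linarith : (0:ℝ) < 1 - p).ne'
    convert h3 using 1
    ring
  have hs : p / (1 - p) ≠ 0 := ne_of_gt (div_pos hp0 (by linarith))
  have h4 := (hin.sqrt hs).neg
  rw [show -(1 / (2 * Real.sqrt (p / (1 - p))) * (1 / (1 - p) ^ 2))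
      = -((1 / (1 - p) ^ 2) / (2 * Real.sqrt (p / (1 - p)))) from by ring]
  exact h4

lemma g1_anti {t : ℝ} (ht0 : 0 < t) (ht2 : t < 1/2) :
    StrictAntiOn g1T (Set.Icc t (1 - t)) := by
  intro a ha b hb hlt
  have ha0 : 0 < a := lt_of_lt_of_le ht0 ha.1
  have hb0 : 0 < b := lt_of_lt_of_le ht0 hb.1
  have hb1 : b < 1 := by have := hb.2; linarith
  apply Real.sqrt_lt_sqrt (div_nonneg (by linarith) hb0.le)
  rw [div_lt_div_iff₀ hb0 ha0]
  nlinarith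

lemma g0_anti {t : ℝ} (ht0 : 0 < t) (ht2 : t < 1/2) :
    StrictAntiOn g0T (Set.Icc t (1 - t)) := by
  intro a ha b hb hlt
  have ha0 : 0 < a := lt_of_lt_of_le ht0 ha.1
  have ha1 : a < 1 := by have := ha.2; linarith
  have hb1 : b < 1 := by have := hb.2; linarith
  have : Real.sqrt (a / (1 - a)) < Real.sqrt (b / (1 - b)) := by
    apply Real.sqrt_lt_sqrt (div_nonneg ha0.le (by linarith))
    rw [div_lt_div_iff₀ (by linarith) (by linarith)]
    nlinarith
  unfold g0T
  linarith

lemma g1_image {t : ℝ} (ht0 : 0 < t) (ht2 : t < 1/2) :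
    g1T '' Set.Icc t (1 - t)
      = Set.Icc (Real.sqrt (t / (1 - t))) (Real.sqrt ((1 - t) / t)) := by
  have hEnd1 : g1T (1 - t) = Real.sqrt (t / (1 - t)) := by unfold g1T; norm_num
  have hEnd2 : g1T t = Real.sqrt ((1 - t) / t) := rfl
  apply Set.Subset.antisymm
  · rintro u ⟨p, hp, rfl⟩
    obtain ⟨hpl, hpr⟩ := hp
    have hp0 : 0 < p := lt_of_lt_of_le ht0 hpl
    constructor
    · apply Real.sqrt_le_sqrt
      rw [div_le_div_iff₀ (by linarith) hp0]
      nlinarith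
    · apply Real.sqrt_le_sqrt
      rw [div_le_div_iff₀ hp0 ht0]
      nlinarith
  · have hcont : ContinuousOn g1T (Set.Icc t (1 - t)) := by
      apply Real.continuous_sqrt.comp_continuousOn
      exact ContinuousOn.div (continuousOn_const.sub continuousOn_id) continuousOn_id
        (fun x hx => by have := hx.1; intro hc; rw [hc] at this; linarith)
    have h5 := intermediate_value_Icc' (by linarith : t ≤ 1 - t) hcont
    rw [hEnd1, hEnd2] at h5
    exact h5

lemma g0_image {t : ℝ} (ht0 : 0 < t) (ht2 : t < 1/2) :
    g0T '' Set.Icc t (1 - t)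
      = Set.Icc (-Real.sqrt ((1 - t) / t)) (-Real.sqrt (t / (1 - t))) := by
  have hEnd1 : g0T (1 - t) = -Real.sqrt ((1 - t) / t) := by unfold g0T; norm_num
  have hEnd2 : g0T t = -Real.sqrt (t / (1 - t)) := rfl
  apply Set.Subset.antisymm
  · rintro u ⟨p, hp, rfl⟩
    obtain ⟨hpl, hpr⟩ := hp
    have hp0 : 0 < p := lt_of_lt_of_le ht0 hpl
    have hp1 : p < 1 := by linarith
    constructor
    · unfold g0T
      have : Real.sqrt (p / (1 - p)) ≤ Real.sqrt ((1 - t) / t) := by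
        apply Real.sqrt_le_sqrt
        rw [div_le_div_iff₀ (by linarith) ht0]
        nlinarith
      linarith
    · unfold g0T
      have : Real.sqrt (t / (1 - t)) ≤ Real.sqrt (p / (1 - p)) := by
        apply Real.sqrt_le_sqrt
        rw [div_le_div_iff₀ (by linarith) (by linarith)]
        nlinarith
      linarith
  · have hcont : ContinuousOn g0T (Set.Icc t (1 - t)) := by
      apply ContinuousOn.neg
      apply Real.continuous_sqrt.comp_continuousOn
      exact ContinuousOn.div continuousOn_id (continuousOn_const.sub continuousOn_id)
        (fun x hx => by
          have h6 := hx.2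
          intro hc
          have hx1 : x = 1 := by linarith
          rw [hx1] at h6
          linarith)
    have h5 := intermediate_value_Icc' (by linarith : t ≤ 1 - t) hcont
    rw [hEnd1, hEnd2] at h5
    exact h5

lemma branch1 {t : ℝ} (ht0 : 0 < t) (ht2 : t < 1/2) (h : ℝ → ℝ) :
    ∫ u in Set.Icc (Real.sqrt (t / (1 - t))) (Real.sqrt ((1 - t) / t)),
        h u * (2 / ((π - 4 * tprime t) * (1 + u ^ 2) ^ 2))
      = ∫ p in Set.Icc t (1 - t), (fT t p * p) * h (g1T p) := by
  have hC : 0 < π - 4 * tprime t := hC_pos ⟨ht0, ht2⟩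
  rw [← g1_image ht0 ht2]
  rw [integral_image_eq_integral_abs_deriv_smul measurableSet_Icc
    (f' := fun p => 1 / (2 * Real.sqrt ((1 - p) / p)) * (-1 / p ^ 2))
    (fun p hp => (g1_hasDeriv (lt_of_lt_of_le ht0 hp.1)
      (by have := hp.2; linarith)).hasDerivWithinAt)
    (g1_anti ht0 ht2).injOn]
  apply setIntegral_congr_fun measurableSet_Icc
  intro p hp
  have hp0 : 0 < p := lt_of_lt_of_le ht0 hp.1
  have hp1 : p < 1 := by have := hp.2; linarith
  have hpne : p ≠ 0 := hp0.ne'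
  simp only [smul_eq_mul]
  have hs0 : 0 < Real.sqrt ((1 - p) / p) :=
    Real.sqrt_pos.mpr (div_pos (by linarith) hp0)
  set s : ℝ := Real.sqrt ((1 - p) / p) with hs_def
  have hsne : s ≠ 0 := hs0.ne'
  have hCne : π - 4 * tprime t ≠ 0 := hC.ne'
  have hsq : s ^ 2 = (1 - p) / p := Real.sq_sqrt (div_nonneg (by linarith) hp0.le)
  have hsqrtpq : Real.sqrt (p * (1 - p)) = p * s := by
    rw [show p * (1 - p) = p ^ 2 * ((1 - p) / p) by field_simp, hs_def,
      Real.sqrt_mul (sq_nonneg p), Real.sqrt_sq hp0.le]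
  have hg1 : g1T p = s := by rw [hs_def]; rfl
  have habs : |1 / (2 * s) * (-1 / p ^ 2)| = 1 / (2 * s) * (1 / p ^ 2) := by
    rw [show 1 / (2 * s) * (-1 / p ^ 2) = -(1 / (2 * s) * (1 / p ^ 2)) by ring, abs_neg,
      abs_of_nonneg (by positivity)]
  rw [fT_mem t p hp, hsqrtpq, hg1, habs, hsq]
  have h1p : 1 + (1 - p) / p = 1 / p := by field_simp; ring
  rw [h1p]
  field_simp

lemma branch0 {t : ℝ} (ht0 : 0 < t) (ht2 : t < 1/2) (h : ℝ → ℝ) :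
    ∫ u in Set.Icc (-Real.sqrt ((1 - t) / t)) (-Real.sqrt (t / (1 - t))),
        h u * (2 / ((π - 4 * tprime t) * (1 + u ^ 2) ^ 2))
      = ∫ p in Set.Icc t (1 - t), (fT t p * (1 - p)) * h (g0T p) := by
  have hC : 0 < π - 4 * tprime t := hC_pos ⟨ht0, ht2⟩
  rw [← g0_image ht0 ht2]
  rw [integral_image_eq_integral_abs_deriv_smul measurableSet_Icc
    (f' := fun p => -(1 / (2 * Real.sqrt (p / (1 - p))) * (1 / (1 - p) ^ 2)))
    (fun p hp => (g0_hasDeriv (lt_of_lt_of_le ht0 hp.1)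
      (by have := hp.2; linarith)).hasDerivWithinAt)
    (g0_anti ht0 ht2).injOn]
  apply setIntegral_congr_fun measurableSet_Icc
  intro p hp
  have hp0 : 0 < p := lt_of_lt_of_le ht0 hp.1
  have hp1 : p < 1 := by have := hp.2; linarith
  have hpne : (1:ℝ) - p ≠ 0 := by linarith
  simp only [smul_eq_mul]
  have hs0 : 0 < Real.sqrt (p / (1 - p)) :=
    Real.sqrt_pos.mpr (div_pos hp0 (by linarith))
  set s : ℝ := Real.sqrt (p / (1 - p)) with hs_def
  have hsne : s ≠ 0 := hs0.ne'
  have hCne : π - 4 * tprime t ≠ 0 := hC.ne'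
  have hsq : s ^ 2 = p / (1 - p) := Real.sq_sqrt (div_nonneg hp0.le (by linarith))
  have hsqrtpq : Real.sqrt (p * (1 - p)) = (1 - p) * s := by
    rw [show p * (1 - p) = (1 - p) ^ 2 * (p / (1 - p)) by field_simp, hs_def,
      Real.sqrt_mul (sq_nonneg (1 - p)), Real.sqrt_sq (by linarith : (0:ℝ) ≤ 1 - p)]
  have hg0 : g0T p = -s := by rw [hs_def]; rfl
  have habs : |(-(1 / (2 * s) * (1 / (1 - p) ^ 2)))| = 1 / (2 * s) * (1 / (1 - p) ^ 2) := by
    rw [abs_neg, abs_of_nonneg (by positivity)]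
  rw [fT_mem t p hp, hsqrtpq, hg0, habs, neg_sq, hsq]
  have h1p : 1 + p / (1 - p) = 1 / (1 - p) := by field_simp; ring
  rw [h1p]
  field_simp

lemma integrableOn_hphi {t : ℝ} (hC : 0 < π - 4 * tprime t) {h : ℝ → ℝ} (hmeas : Measurable h)
    {Cb : ℝ} (hbd : ∀ u, |h u| ≤ Cb) (a b : ℝ) :
    IntegrableOn (fun u => h u * (2 / ((π - 4 * tprime t) * (1 + u ^ 2) ^ 2)))
      (Set.Icc a b) volume := by
  have hCb : 0 ≤ Cb := le_trans (abs_nonneg _) (hbd 0)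
  haveI hfin : IsFiniteMeasure (volume.restrict (Set.Icc a b)) := by
    constructor
    rw [Measure.restrict_apply_univ, Real.volume_Icc]
    exact ENNReal.ofReal_lt_top
  apply Integrable.mono' (g := fun _ => Cb * (2 / (π - 4 * tprime t))) (integrable_const _)
  · exact (hmeas.mul (measurable_const.div (measurable_const.mul
      ((measurable_const.add (measurable_id.pow_const 2)).pow_const 2)))).aestronglyMeasurable
  · apply ae_of_all
    intro u
    rw [Real.norm_eq_abs, abs_mul]
    have hphi0 : 0 ≤ 2 / ((π - 4 * tprime t) * (1 + u ^ 2) ^ 2) := by positivity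
    rw [abs_of_nonneg hphi0]
    apply mul_le_mul (hbd u) ?_ hphi0 hCb
    rw [div_le_div_iff₀ (by positivity) hC]
    nlinarith [mul_nonneg hC.le (sq_nonneg u), mul_nonneg hC.le (sq_nonneg (u ^ 2))]

lemma isFinite_wd {t : ℝ} (ht0 : 0 < t) (ht2 : t < 1/2) (hC : 0 < π - 4 * tprime t)
    {w : ℝ → ℝ} (hw : ∀ p ∈ Set.Icc t (1 - t), w p ≤ 1) :
    IsFiniteMeasure (volume.withDensity fun p => ENNReal.ofReal (fT t p * w p)) := by
  set M : ℝ := 1 / ((π - 4 * tprime t) * Real.sqrt (t * (1 - t))) with hM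
  constructor
  rw [withDensity_apply _ MeasurableSet.univ, Measure.restrict_univ]
  have hstep : ∫⁻ p, ENNReal.ofReal (fT t p * w p)
      ≤ ∫⁻ p, (Set.Icc t (1 - t)).indicator (fun _ => ENNReal.ofReal M) p := by
    apply lintegral_mono
    intro p
    by_cases hp : p ∈ Set.Icc t (1 - t)
    · rw [Set.indicator_of_mem hp]
      apply ENNReal.ofReal_le_ofReal
      have hf0 : 0 ≤ fT t p := fT_nonneg t p hC
      calc fT t p * w p ≤ fT t p * 1 := mul_le_mul_of_nonneg_left (hw p hp) hf0
        _ = fT t p := mul_one _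
        _ ≤ M := by
            rw [fT_mem t p hp, hM]
            apply one_div_le_one_div_of_le
            · apply mul_pos hC
              apply Real.sqrt_pos.mpr
              nlinarith
            · apply mul_le_mul_of_nonneg_left _ hC.le
              apply Real.sqrt_le_sqrt
              obtain ⟨h1, h2⟩ := hp
              nlinarith
    · simp only [Set.indicator_of_notMem hp, fT_not_mem t p hp, zero_mul,
        ENNReal.ofReal_zero, le_refl]
  calc (∫⁻ p, ENNReal.ofReal (fT t p * w p))
      ≤ ∫⁻ p, (Set.Icc t (1 - t)).indicator (fun _ => ENNReal.ofReal M) p := hstep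
    _ = ENNReal.ofReal M * volume (Set.Icc t (1 - t)) := by
        rw [lintegral_indicator measurableSet_Icc, setLIntegral_const]
    _ < ⊤ := by
        apply ENNReal.mul_lt_top ENNReal.ofReal_lt_top
        rw [Real.volume_Icc]
        exact ENNReal.ofReal_lt_top

lemma measurable_g1T : Measurable g1T :=
  Real.continuous_sqrt.measurable.comp ((measurable_const.sub measurable_id).div measurable_id)

lemma measurable_g0T : Measurable g0T :=
  (Real.continuous_sqrt.measurable.comp
    (measurable_id.div (measurable_const.sub measurable_id))).neg

/-- the single-column accusation value `U = g1^T p` (if `X = 1`) or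
`g0^T p` (if `X = 0`), where `p` has density `f^T` and `X` is Bernoulli(`p`) given `p`,
has probability density `φ(u) = 2/((π - 4t')·(1+u²)²)` on
`T = [√(t/(1-t)), √((1-t)/t)] ∪ [-√((1-t)/t), -√(t/(1-t))]` (and `0` outside `T`):
for every bounded measurable `h`, `E[h(U)] = ∫_T h(u)·φ(u) du`. -/
theorem accusation_value_density
    (t : ℝ) (ht : t ∈ Set.Ioo (0:ℝ) (1/2))
    (U : ℝ × Bool → ℝ) (hU : ∀ q, U q = if q.2 then g1T q.1 else g0T q.1)
    (T : Set ℝ)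
    (hT : T = Set.Icc (Real.sqrt (t / (1-t))) (Real.sqrt ((1-t) / t)) ∪
        Set.Icc (-Real.sqrt ((1-t) / t)) (-Real.sqrt (t / (1-t))))
    (h : ℝ → ℝ) (hmeas : Measurable h) (hbd : ∃ Cb, ∀ u, |h u| ≤ Cb) :
    ∫ q, h (U q) ∂(columnMeasure t)
      = ∫ u in T, h u * (2 / ((π - 4 * tprime t) * (1 + u ^ 2) ^ 2)) := by
  obtain ⟨Cb, hbd⟩ := hbd
  obtain ⟨ht0, ht2⟩ := ht
  have ht2 : t < 1/2 := ht2
  have hC : 0 < π - 4 * tprime t := hC_pos ⟨ht0, ht2⟩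
  -- measurability of the integrand
  have hUm : Measurable U := by
    have hUe : U = fun q : ℝ × Bool => if q.2 then g1T q.1 else g0T q.1 := funext hU
    rw [hUe]
    apply measurable_from_prod_countable_left
    intro y
    cases y
    · simpa using measurable_g0T
    · simpa using measurable_g1T
  have hF : Measurable fun q : ℝ × Bool => h (U q) := hmeas.comp hUm
  -- finiteness
  haveI i1 : IsFiniteMeasure (volume.withDensity fun p => ENNReal.ofReal (fT t p * p)) :=
    isFinite_wd ht0 ht2 hC (fun p hp => by have := hp.2; linarith)
  haveI i0 : IsFiniteMeasure (volume.withDensity fun p => ENNReal.ofReal (fT t p * (1 - p))) :=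
    isFinite_wd ht0 ht2 hC (fun p hp => by have := hp.1; linarith)
  rw [columnMeasure_eq t hC]
  have hint1 : Integrable (fun q => h (U q))
      (Measure.map (fun p => (p, true))
        (volume.withDensity fun p => ENNReal.ofReal (fT t p * p))) := by
    apply Integrable.mono' (integrable_const Cb) hF.aestronglyMeasurable
    exact ae_of_all _ fun q => by rw [Real.norm_eq_abs]; exact hbd _
  have hint0 : Integrable (fun q => h (U q))
      (Measure.map (fun p => (p, false))
        (volume.withDensity fun p => ENNReal.ofReal (fT t p * (1 - p)))) := by
    apply Integrable.mono' (integrable_const Cb) hF.aestronglyMeasurable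
    exact ae_of_all _ fun q => by rw [Real.norm_eq_abs]; exact hbd _
  rw [integral_add_measure hint1 hint0,
    integral_map measurable_prodMk_right.aemeasurable hF.aestronglyMeasurable,
    integral_map measurable_prodMk_right.aemeasurable hF.aestronglyMeasurable]
  have hU1 : ∀ p : ℝ, h (U (p, true)) = h (g1T p) := fun p => by rw [hU]; rfl
  have hU0 : ∀ p : ℝ, h (U (p, false)) = h (g0T p) := fun p => by rw [hU]; rfl
  simp only [hU1, hU0]
  have hofr1 : (fun p : ℝ => ENNReal.ofReal (fT t p * p))
      = fun p => ((fT t p * p).toNNReal : ENNReal) := rfl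
  have hofr0 : (fun p : ℝ => ENNReal.ofReal (fT t p * (1 - p)))
      = fun p => ((fT t p * (1 - p)).toNNReal : ENNReal) := rfl
  have hnn1 : ∀ p, 0 ≤ fT t p * p := by
    intro p
    by_cases hp : p ∈ Set.Icc t (1 - t)
    · exact mul_nonneg (fT_nonneg t p hC) (le_trans ht0.le hp.1)
    · rw [fT_not_mem t p hp, zero_mul]
  have hnn0 : ∀ p, 0 ≤ fT t p * (1 - p) := by
    intro p
    by_cases hp : p ∈ Set.Icc t (1 - t)
    · refine mul_nonneg (fT_nonneg t p hC) ?_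
      have := hp.2; linarith
    · rw [fT_not_mem t p hp, zero_mul]
  have hm1' : Measurable fun p : ℝ => (fT t p * p).toNNReal :=
    ((measurable_fT t).mul measurable_id).real_toNNReal
  have hm0' : Measurable fun p : ℝ => (fT t p * (1 - p)).toNNReal :=
    ((measurable_fT t).mul (measurable_const.sub measurable_id)).real_toNNReal
  rw [hofr1, hofr0, integral_withDensity_eq_integral_smul hm1' _,
    integral_withDensity_eq_integral_smul hm0' _]
  have hsm1 : (fun p => (fT t p * p).toNNReal • h (g1T p))
      = fun p => (fT t p * p) * h (g1T p) :=
    funext fun p => by rw [NNReal.smul_def, Real.coe_toNNReal _ (hnn1 p), smul_eq_mul]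
  have hsm0 : (fun p => (fT t p * (1 - p)).toNNReal • h (g0T p))
      = fun p => (fT t p * (1 - p)) * h (g0T p) :=
    funext fun p => by rw [NNReal.smul_def, Real.coe_toNNReal _ (hnn0 p), smul_eq_mul]
  rw [hsm1, hsm0,
    ← setIntegral_eq_integral_of_forall_compl_eq_zero
      (s := Set.Icc t (1 - t)) (μ := volume)
      (fun p hp => by rw [fT_not_mem t p hp, zero_mul, zero_mul]),
    ← setIntegral_eq_integral_of_forall_compl_eq_zero
      (s := Set.Icc t (1 - t)) (μ := volume)
      (fun p hp => by rw [fT_not_mem t p hp, zero_mul, zero_mul]),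
    ← branch1 ht0 ht2 h, ← branch0 ht0 ht2 h, hT]
  have hsp : 0 < Real.sqrt (t / (1 - t)) := Real.sqrt_pos.mpr (div_pos ht0 (by linarith))
  have hdisj : Disjoint (Set.Icc (Real.sqrt (t / (1 - t))) (Real.sqrt ((1 - t) / t)))
      (Set.Icc (-Real.sqrt ((1 - t) / t)) (-Real.sqrt (t / (1 - t)))) := by
    rw [Set.disjoint_left]
    intro x hx1 hx2
    have h1 := hx1.1
    have h2 := hx2.2
    linarith
  rw [setIntegral_union hdisj measurableSet_Icc
    (integrableOn_hphi hC hmeas hbd _ _) (integrableOn_hphi hC hmeas hbd _ _)]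

end
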